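/- Let ω be a primitive substitution on a finite tile set with expansion λ > 1, and suppose there is a tile p, a vector x ∈ ℝ², and n ∈ ℤ⁺ with p + x ∈ ωⁿ(p + x) and supp(p + x) disjoint from the boundary of supp ωⁿ(p + x). Then the increasing union of supports ⋃ᵢ supp ω^{in}(p + x) equals all of ℝ². -/

import Mathlib

/-- A planar substitution on a finite collection of tiles in ℝ². Each tile (indexed by
`TileIdx`) has a support homeomorphic to the closed unit disc and a colour label. The
substitution expands each tile by the factor `lam > 1` and divides it into translated copies
of tiles (`pieces`), with pairwise disjoint interiors, whose supports union to the expanded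
support. -/
structure PlanarSubstitution where
  TileIdx : Type
  finite : Finite TileIdx
  support : TileIdx → Set (ℝ × ℝ)
  label : TileIdx → ℕ
  disc : ∀ p, Nonempty (↥(support p) ≃ₜ ↥(Metric.closedBall (0 : ℝ × ℝ) 1))
  lam : ℝ
  one_lt_lam : 1 < lam
  pieces : TileIdx → Set (TileIdx × (ℝ × ℝ))
  pieces_finite : ∀ p, (pieces p).Finite
  pieces_nonempty : ∀ p, (pieces p).Nonempty
  support_eq : ∀ p,
    (⋃ q ∈ pieces p, (fun y => y + q.2) '' support q.1) = (fun y => lam • y) '' support p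
  disjoint_interiors : ∀ p, ∀ q ∈ pieces p, ∀ r ∈ pieces p, q ≠ r →
    Disjoint (interior ((fun y => y + q.2) '' support q.1))
      (interior ((fun y => y + r.2) '' support r.1))

/-- The n-supertile ωⁿ(p), as the collection of its constituent tiles, each recorded as a
prototile index together with a translation vector (using ω(q + x) = ω(q) + λ·x). -/
def PlanarSubstitution.iter (S : PlanarSubstitution) : ℕ → S.TileIdx → Set (S.TileIdx × (ℝ × ℝ))
  | 0 => fun p => {(p, 0)}
  | n + 1 => fun p =>
      ⋃ q ∈ S.pieces p, (fun r => (r.1, r.2 + S.lam ^ n • q.2)) '' S.iter n q.1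


/-- A substitution is primitive if some power of it, applied to any tile, contains a copy of
every tile. -/
def PlanarSubstitution.Primitive (S : PlanarSubstitution) : Prop :=
  ∃ k : ℕ, 0 < k ∧ ∀ p q : S.TileIdx, ∃ t ∈ S.iter k p, t.1 = q

/-- Each tile of the `n`-supertile sits inside the expanded support `λⁿ · supp p`. -/
lemma PlanarSubstitution.iter_support_subset (S : PlanarSubstitution) :
    ∀ (n : ℕ) (p : S.TileIdx) (t : S.TileIdx × (ℝ × ℝ)), t ∈ S.iter n p →
      ∀ y ∈ S.support t.1, ∃ z ∈ S.support p, y + t.2 = S.lam ^ n • z := by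
  intro n
  induction n with
  | zero =>
    intro p t ht y hy
    simp only [PlanarSubstitution.iter, Set.mem_singleton_iff] at ht
    subst ht
    exact ⟨y, hy, by simp⟩
  | succ n ih =>
    intro p t ht y hy
    simp only [PlanarSubstitution.iter, Set.mem_iUnion, Set.mem_image] at ht
    obtain ⟨q, hq, r, hr, rfl⟩ := ht
    obtain ⟨z, hz, hz2⟩ := ih q.1 r hr y hy
    have hmem : z + q.2 ∈ ⋃ q' ∈ S.pieces p, (fun y => y + q'.2) '' S.support q'.1 :=
      Set.mem_biUnion hq ⟨z, hz, rfl⟩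
    rw [S.support_eq p] at hmem
    obtain ⟨w, hw, hw2⟩ := hmem
    refine ⟨w, hw, ?_⟩
    show y + (r.2 + S.lam ^ n • q.2) = S.lam ^ (n + 1) • w
    have h1 : y + (r.2 + S.lam ^ n • q.2) = S.lam ^ n • (z + q.2) := by
      rw [← add_assoc, hz2, smul_add]
    rw [h1, ← hw2, smul_smul, ← pow_succ]

/-- If ω is primitive and some tile p + x occurs inside its own n-supertile
ωⁿ(p + x) with support disjoint from the boundary of supp ωⁿ(p + x), then the increasing
union of the supertile supports supp ω^{in}(p + x) = λ^{in}·supp p + λ^{in}·x exhausts ℝ². -/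
theorem union_supertile_supports_eq_univ (S : PlanarSubstitution)
    (hprim : S.Primitive)
    (p : S.TileIdx) (x : ℝ × ℝ) (n : ℕ) (hn : 0 < n)
    (hfix : ∃ t ∈ S.iter n p, t.1 = p ∧ t.2 + S.lam ^ n • x = x)
    (hbd : Disjoint ((fun y => y + x) '' S.support p)
      (frontier ((fun y => S.lam ^ n • y + S.lam ^ n • x) '' S.support p))) :
    (⋃ i : ℕ, (fun y => S.lam ^ (i * n) • y + S.lam ^ (i * n) • x) '' S.support p)
      = Set.univ := by
  
  classical
  set c : ℝ := S.lam ^ n with hc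
  have hc1 : 1 < c := one_lt_pow₀ S.one_lt_lam hn.ne'
  have hc0 : (0:ℝ) < c := lt_trans one_pos hc1
  have hcne : c ≠ 0 := hc0.ne'
  set A : ℕ → Set (ℝ × ℝ) :=
    fun i => (fun y => S.lam ^ (i * n) • y + S.lam ^ (i * n) • x) '' S.support p with hA
  -- basic rewrites
  have hA0 : A 0 = (fun y => y + x) '' S.support p := by
    simp [hA]
  have hA1 : A 1 = (fun y => c • y + c • x) '' S.support p := by
    simp [hA, one_mul, hc]
  have hAsucc : ∀ i, A (i + 1) = (fun z => c • z) '' A i := by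
    intro i
    rw [hA]
    rw [← Set.image_comp]
    apply Set.image_congr'
    intro y
    simp only [Function.comp_apply]
    rw [add_mul, one_mul, pow_add, smul_add, ← hc, mul_comm, mul_smul, mul_smul]
  -- tile support is compact and nonempty
  obtain ⟨e⟩ := S.disc p
  have hcompsupp : IsCompact (S.support p) := by
    have : CompactSpace ↥(Metric.closedBall (0 : ℝ × ℝ) 1) :=
      isCompact_iff_compactSpace.mp (isCompact_closedBall _ _)
    have : CompactSpace ↥(S.support p) := e.symm.compactSpace
    exact isCompact_iff_compactSpace.mpr this
  have hne : (S.support p).Nonempty := by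
    have h0 : (0 : ℝ × ℝ) ∈ Metric.closedBall (0 : ℝ × ℝ) 1 := by
      simp [Metric.mem_closedBall]
    exact ⟨(e.symm ⟨0, h0⟩ : ↥(S.support p)), (e.symm ⟨0, h0⟩).2⟩
  -- A 0 ⊆ A 1
  obtain ⟨t, ht, htp, htx⟩ := hfix
  have h01 : A 0 ⊆ A 1 := by
    rw [hA0, hA1]
    rintro - ⟨y, hy, rfl⟩
    obtain ⟨z, hz, hz2⟩ := S.iter_support_subset n p t ht y (htp ▸ hy)
    refine ⟨z, hz, ?_⟩
    rw [← hc] at hz2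
    show c • z + c • x = y + x
    rw [← hz2, add_assoc, htx]
  have hmono : ∀ i, A i ⊆ A (i + 1) := by
    intro i
    induction i with
    | zero => exact h01
    | succ i ih =>
      rw [hAsucc, hAsucc]
      exact Set.image_mono ih
  have hmono' : ∀ i j, i ≤ j → A i ⊆ A j := by
    intro i j hij
    induction j with
    | zero => rw [Nat.le_zero.mp hij]
    | succ j ih =>
      rcases Nat.lt_or_ge i (j+1) with h | h
      · exact (ih (Nat.lt_succ_iff.mp h)).trans (hmono j)
      · rw [le_antisymm hij h]
  -- positive gap between A 0 and frontier (A 1)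
  have hA0compact : IsCompact (A 0) := by
    rw [hA0]
    exact hcompsupp.image (by continuity)
  have hbd' : Disjoint (A 0) (frontier (A 1)) := by
    rw [hA0, hA1]; exact hbd
  obtain ⟨δ, hδ, hdisj⟩ :=
    hbd'.exists_thickenings hA0compact isClosed_frontier
  have hgap : ∀ v ∈ A 0, ∀ u : ℝ × ℝ, dist u v < δ → u ∉ frontier (A 1) := by
    intro v hv u hd hu
    exact Set.disjoint_left.mp hdisj
      (Metric.mem_thickening_iff.mpr ⟨v, hv, hd⟩)
      (Metric.self_subset_thickening hδ _ hu)
  -- scaled gap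
  have hgapi : ∀ i, ∀ v ∈ A i, ∀ u : ℝ × ℝ, dist u v < c ^ i * δ → u ∉ frontier (A (i + 1)) := by
    intro i
    induction i with
    | zero => simpa using hgap
    | succ i ih =>
      intro v hv u hd hu
      rw [hAsucc] at hv
      obtain ⟨v', hv', rfl⟩ := hv
      have hfr : frontier (A (i + 1 + 1)) =
          (fun z : ℝ × ℝ => c • z) '' frontier (A (i + 1)) := by
        rw [hAsucc (i+1)]
        have := (Homeomorph.smulOfNeZero c hcne (α := ℝ × ℝ)).image_frontier (A (i+1))
        simpa using this.symm
      rw [hfr] at hu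
      obtain ⟨w, hw, hwu⟩ := hu
      have : dist w v' < c ^ i * δ := by
        have h2 : dist u (c • v') = c * dist w v' := by
          rw [← hwu, dist_smul₀]
          simp [abs_of_pos hc0]
        rw [h2, pow_succ, mul_comm (c ^ i) c, mul_assoc] at hd
        exact lt_of_mul_lt_mul_left hd hc0.le
      exact ih v' hv' w this hw
  -- extension: points within c^i * (δ/2) of A i are in A (i+1)
  have hext : ∀ i, ∀ u v : ℝ × ℝ, v ∈ A i → dist u v ≤ c ^ i * (δ / 2) → u ∈ A (i + 1) := by
    intro i u v hv hd
    by_contra hu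
    have hvA1 : v ∈ A (i + 1) := hmono i hv
    have hseg : segment ℝ v u ⊆ Metric.closedBall v (dist u v) :=
      (convex_closedBall v (dist u v)).segment_subset
        (Metric.mem_closedBall_self dist_nonneg) (Metric.mem_closedBall.mpr le_rfl)
    have hsegfr : ∀ w ∈ segment ℝ v u, w ∉ frontier (A (i + 1)) := by
      intro w hw
      refine hgapi i v hv w ?_
      have h1 : dist w v ≤ c ^ i * (δ / 2) := le_trans (hseg hw) hd
      have h2 : c ^ i * (δ / 2) < c ^ i * δ := by
        apply mul_lt_mul_of_pos_left (half_lt_self hδ) (pow_pos hc0 i)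
      exact lt_of_le_of_lt h1 h2
    -- segment is preconnected; it meets interior and closure-complement, contradiction
    have hconn : IsPreconnected (segment ℝ v u) := (convex_segment v u).isPreconnected
    have hv_int : v ∈ interior (A (i + 1)) := by
      have hvfr := hsegfr v (left_mem_segment ℝ v u)
      have : v ∈ closure (A (i + 1)) := subset_closure hvA1
      rw [frontier, Set.mem_diff] at hvfr
      push_neg at hvfr
      exact hvfr this
    have hu_ncl : u ∉ closure (A (i + 1)) := by
      intro hucl
      have hufr := hsegfr u (right_mem_segment ℝ v u)
      rw [frontier, Set.mem_diff] at hufr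
      push_neg at hufr
      exact hu (interior_subset (hufr hucl))
    have hsub : segment ℝ v u ⊆ interior (A (i + 1)) ∪ (closure (A (i + 1)))ᶜ := by
      intro w hw
      by_cases hwcl : w ∈ closure (A (i + 1))
      · left
        have hwfr := hsegfr w hw
        rw [frontier, Set.mem_diff] at hwfr
        push_neg at hwfr
        exact hwfr hwcl
      · exact Or.inr hwcl
    obtain ⟨w, -, hw1, hw2⟩ := hconn _ _ isOpen_interior (isClosed_closure.isOpen_compl) hsub
      ⟨v, left_mem_segment ℝ v u, hv_int⟩ ⟨u, right_mem_segment ℝ v u, hu_ncl⟩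
    exact hw2 (subset_closure (interior_subset hw1))
  -- growing balls
  obtain ⟨a, ha⟩ := hne
  set b : ℝ × ℝ := a + x with hb
  have hbA : b ∈ A 0 := by rw [hA0]; exact ⟨a, ha, rfl⟩
  have hball : ∀ i : ℕ, Metric.closedBall b (i * (δ / 2)) ⊆ A i := by
    intro i
    induction i with
    | zero =>
      intro z hz
      simp only [Nat.cast_zero, zero_mul, Metric.mem_closedBall] at hz
      have : z = b := by
        have := dist_nonneg (x := z) (y := b)
        have : dist z b = 0 := le_antisymm hz this
        exact dist_eq_zero.mp this
      rw [this]; exact hbA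
    | succ i ih =>
      intro z hz
      rw [Metric.mem_closedBall] at hz
      rcases le_or_gt (dist z b) (i * (δ / 2)) with h | h
      · exact hmono i (ih (Metric.mem_closedBall.mpr h))
      · set D : ℝ := dist z b with hD
        have hDpos : 0 < D := lt_of_le_of_lt (mul_nonneg (Nat.cast_nonneg i) (half_pos hδ).le) h
        set s : ℝ := (i * (δ / 2)) / D with hs
        have hs0 : 0 ≤ s := div_nonneg (mul_nonneg (Nat.cast_nonneg i) (half_pos hδ).le) hDpos.le
        have hs1 : s ≤ 1 := by
          rw [hs, div_le_one hDpos]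
          exact h.le
        set v : ℝ × ℝ := b + s • (z - b) with hv
        have hvmem : v ∈ A i := by
          apply ih
          rw [Metric.mem_closedBall, hv]
          have : dist (b + s • (z - b)) b = s * D := by
            rw [dist_eq_norm]
            simp only [add_sub_cancel_left, norm_smul]
            rw [Real.norm_eq_abs, abs_of_nonneg hs0, hD, dist_eq_norm]
          rw [this, hs, div_mul_cancel₀ _ hDpos.ne']
        have hdzv : dist z v ≤ c ^ i * (δ / 2) := by
          have h1 : dist z v = (1 - s) * D := by
            rw [hv, dist_eq_norm]
            have : z - (b + s • (z - b)) = (1 - s) • (z - b) := by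
              rw [sub_smul, one_smul]; abel
            rw [this, norm_smul, Real.norm_eq_abs, abs_of_nonneg (by linarith), hD, dist_eq_norm]
          have h2 : (1 - s) * D = D - i * (δ / 2) := by
            rw [sub_mul, one_mul, hs, div_mul_cancel₀ _ hDpos.ne']
          have h3 : D - i * (δ / 2) ≤ δ / 2 := by
            have : (↑(i + 1) : ℝ) = i + 1 := by push_cast; ring
            rw [this] at hz
            nlinarith
          have h4 : (δ / 2 : ℝ) ≤ c ^ i * (δ / 2) :=
            le_mul_of_one_le_left (half_pos hδ).le (one_le_pow₀ hc1.le)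
          linarith [h1, h2]
        exact hext i z v hvmem hdzv
  -- conclude
  rw [Set.eq_univ_iff_forall]
  intro z
  obtain ⟨i, hi⟩ := exists_nat_ge (dist z b / (δ / 2))
  have hzi : dist z b ≤ i * (δ / 2) := by
    rw [div_le_iff₀ (half_pos hδ)] at hi
    linarith
  exact Set.mem_iUnion.mpr ⟨i, hball i (Metric.mem_closedBall.mpr hzi)⟩
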